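/- Let Ĝ be a signed graph, Ĥ a signed graph whose underlying graph has negative girth at least k (every negative cycle has length at least k), and φ a sign-preserving homomorphism from Ĝ to Ĥ. Then for every i with 1 ≤ i ≤ k-1, φ is a proper colouring of the strong exact-distance -i graph of Ĝ, i.e., φ(u) ≠ φ(v) whenever uv is an edge of that graph. -/

import Mathlib

open SimpleGraph

/-- The number of negative edges of a walk, where `σ e = true` means edge `e` is negative. -/
def negCount {V : Type} {G : SimpleGraph V} (σ : Sym2 V → Bool) {x y : V}
    (p : G.Walk x y) : ℕ :=
  (p.edges.filter (fun e => σ e)).length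

/-- A walk is negative if it contains an odd number of negative edges. -/
def IsNegWalk {V : Type} {G : SimpleGraph V} (σ : Sym2 V → Bool) {x y : V}
    (p : G.Walk x y) : Prop :=
  Odd (negCount σ p)

/-- The exact-distance `-k` graph of the signed graph `(G, σ)`:
`xy` is an edge iff `d_G(x,y) = k` and every `xy`-path of length `k` is negative. -/
def exactDistNeg {V : Type} (G : SimpleGraph V) (σ : Sym2 V → Bool) (k : ℕ) :
    SimpleGraph V :=
  SimpleGraph.fromRel (fun x y =>
    G.dist x y = k ∧ ∀ p : G.Walk x y, p.IsPath → p.length = k → IsNegWalk σ p)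

/-- The strong exact-distance `-k` graph of the signed graph `(G, σ)`:
`xy` is an edge iff `d_G(x,y) = k` and some `xy`-path of length `k` is negative. -/
def strongExactDistNeg {V : Type} (G : SimpleGraph V) (σ : Sym2 V → Bool) (k : ℕ) :
    SimpleGraph V :=
  SimpleGraph.fromRel (fun x y =>
    G.dist x y = k ∧ ∃ p : G.Walk x y, p.IsPath ∧ p.length = k ∧ IsNegWalk σ p)

/-- `WReach G L k y` : the set of vertices weakly `k`-reachable from `y` w.r.t. ordering `L`. -/
def WReach {V : Type} (G : SimpleGraph V) (L : LinearOrder V) (k : ℕ) (y : V) : Set V :=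
  {x | ∃ p : G.Walk x y, p.IsPath ∧ p.length ≤ k ∧ ∀ z ∈ p.support, L.le x z}

/-- The weak `k`-colouring number of `G`. -/
noncomputable def wcol {V : Type} (G : SimpleGraph V) (k : ℕ) : ℕ :=
  ⨅ L : LinearOrder V, ⨆ y : V, (WReach G L k y).ncard

/-- `DReach G L k y` : the set of vertices `x` such that there is an `xy`-path
`z_0, …, z_s` (`x = z_0`, `y = z_s`) of length `s ≤ k` on which `x` is the `L`-minimum
and `y ≤_L z_i` for all `⌊k/2⌋ + 1 ≤ i ≤ s`. -/
def DReach {V : Type} (G : SimpleGraph V) (L : LinearOrder V) (k : ℕ) (y : V) : Set V :=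
  {x | ∃ p : G.Walk x y, p.IsPath ∧ p.length ≤ k ∧ (∀ z ∈ p.support, L.le x z) ∧
        ∀ i, k / 2 + 1 ≤ i → i ≤ p.length → L.le y (p.support.getD i y)}

/-- The distance-`k`-colouring number of `G`. -/
noncomputable def dcol {V : Type} (G : SimpleGraph V) (k : ℕ) : ℕ :=
  ⨅ L : LinearOrder V, ⨆ y : V, (DReach G L k y).ncard

/-- `SReach G L k y` : the set of vertices strongly `k`-reachable from `y` w.r.t. `L`. -/
def SReach {V : Type} (G : SimpleGraph V) (L : LinearOrder V) (k : ℕ) (y : V) : Set V :=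
  {x | ∃ p : G.Walk x y, p.IsPath ∧ p.length ≤ k ∧ (∀ z ∈ p.support, L.le x z) ∧
        ∀ z ∈ p.support, z ≠ x → L.le y z}

/-- The strong `k`-colouring number of `G`. -/
noncomputable def scol {V : Type} (G : SimpleGraph V) (k : ℕ) : ℕ :=
  ⨅ L : LinearOrder V, ⨆ y : V, (SReach G L k y).ncard

/-- `H` is a minor of `G` (branch-set definition). -/
def IsMinor {W V : Type} (H : SimpleGraph W) (G : SimpleGraph V) : Prop :=
  ∃ B : W → Set V,
    (∀ w, (B w).Nonempty) ∧
    (∀ w, (G.induce (B w)).Connected) ∧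
    (Pairwise (Function.onFun Disjoint B)) ∧
    ∀ w w', H.Adj w w' → ∃ u ∈ B w, ∃ v ∈ B w', G.Adj u v

/-- `G` is planar iff it has no `K₅` and no `K₃,₃` minor (Wagner's theorem). -/
def IsPlanar {V : Type} (G : SimpleGraph V) : Prop :=
  ¬ IsMinor (completeGraph (Fin 5)) G ∧
  ¬ IsMinor (completeBipartiteGraph (Fin 3) (Fin 3)) G

/-- `G` is outerplanar iff it has no `K₄` and no `K₂,₃` minor. -/
def IsOuterplanar {V : Type} (G : SimpleGraph V) : Prop :=
  ¬ IsMinor (completeGraph (Fin 4)) G ∧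
  ¬ IsMinor (completeBipartiteGraph (Fin 2) (Fin 3)) G

/-- `G` has treewidth at most `t` (tree-decomposition definition). -/
def HasTreewidthLE {V : Type} (G : SimpleGraph V) (t : ℕ) : Prop :=
  ∃ (ι : Type) (T : SimpleGraph ι) (B : ι → Finset V),
    T.Connected ∧ T.IsAcyclic ∧
    (∀ v, ∃ i, v ∈ B i) ∧
    (∀ u v, G.Adj u v → ∃ i, u ∈ B i ∧ v ∈ B i) ∧
    (∀ v, (T.induce {i | v ∈ B i}).Connected) ∧
    (∀ i, (B i).card ≤ t + 1)
lemma negCount_nil {V : Type} {G : SimpleGraph V} (σ : Sym2 V → Bool) {x : V} :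
    negCount σ (Walk.nil : G.Walk x x) = 0 := rfl

lemma negCount_cons {V : Type} {G : SimpleGraph V} (σ : Sym2 V → Bool) {x y z : V}
    (h : G.Adj x y) (p : G.Walk y z) :
    negCount σ (Walk.cons h p) = (if σ s(x,y) then 1 else 0) + negCount σ p := by
  simp [negCount, Walk.edges_cons, List.filter_cons]
  split <;> simp [Nat.add_comm]

lemma negCount_append {V : Type} {G : SimpleGraph V} (σ : Sym2 V → Bool) {x y z : V}
    (p : G.Walk x y) (q : G.Walk y z) :
    negCount σ (p.append q) = negCount σ p + negCount σ q := by
  simp [negCount, Walk.edges_append, List.filter_append]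

lemma negCount_copy {V : Type} {G : SimpleGraph V} (σ : Sym2 V → Bool) {x y x' y' : V}
    (p : G.Walk x y) (hx : x = x') (hy : y = y') :
    negCount σ (p.copy hx hy) = negCount σ p := by
  subst hx; subst hy; rfl

lemma path_length_one_of_mem_edges {V : Type} {G : SimpleGraph V} :
    ∀ {y w : V} (p : G.Walk y w), p.IsPath → s(w,y) ∈ p.edges → p.length = 1 := by
  intro y w p
  induction p with
  | nil => simp
  | @cons a b c h q ih =>
    intro hp he
    rw [Walk.edges_cons, List.mem_cons] at he
    rcases he with he | he
    · rw [Sym2.eq_iff] at he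
      rcases he with ⟨h1, h2⟩ | ⟨h1, h2⟩
      · subst h1; subst h2; exact absurd h (G.irrefl)
      · subst h1
        have : q = Walk.nil := Walk.isPath_iff_eq_nil.mp hp.of_cons
        subst this; simp
    · exfalso
      have hy : a ∈ q.support := Walk.snd_mem_support_of_mem_edges q he
      have := hp.support_nodup
      rw [Walk.support_cons] at this
      exact (List.nodup_cons.mp this).1 hy

lemma exists_neg_cycle {W : Type} {H : SimpleGraph W} (τ : Sym2 W → Bool) :
    ∀ (n : ℕ) (w : W) (c : H.Walk w w), c.length ≤ n → Odd (negCount τ c) →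
      ∃ (x : W) (d : H.Walk x x), d.IsCycle ∧ Odd (negCount τ d) ∧ d.length ≤ c.length := by
  intro n
  induction n with
  | zero =>
    intro w c hc hodd
    interval_cases h : c.length
    · rw [Walk.length_eq_zero_iff, Walk.nil_iff_eq_nil] at h
      subst h
      simp [negCount_nil] at hodd
  | succ n ih =>
    intro w c hc hodd
    classical
    cases c with
    | nil => simp [negCount_nil] at hodd
    | @cons _ y _ h d' =>
      by_cases hnd : d'.support.Nodup
      · have hpath : d'.IsPath := (Walk.isPath_def d').mpr hnd
        by_cases he : s(w, y) ∈ d'.edges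
        · exfalso
          have hl := path_length_one_of_mem_edges d' hpath he
          -- d'.edges is a singleton [s(w,y)]
          have hlen : d'.edges.length = 1 := by
            rw [Walk.length_edges]; exact hl
          have hed : d'.edges = [s(w, y)] := by
            rcases List.length_eq_one_iff.mp hlen with ⟨e, he'⟩
            rw [he'] at he ⊢
            simp at he
            rw [he]
          have : negCount τ (Walk.cons h d') =
              (if τ s(w,y) then 1 else 0) + (if τ s(w,y) then 1 else 0) := by
            rw [negCount_cons]
            congr 1
            simp [negCount, hed, List.filter]
            split <;> simp_all
          rw [this] at hodd
          rcases hodd with ⟨m, hm⟩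
          split at hm <;> omega
        · exact ⟨w, Walk.cons h d', (Walk.cons_isCycle_iff d' h).mpr ⟨hpath, he⟩, hodd, le_rfl⟩
      · obtain ⟨x, hdup⟩ := List.exists_duplicate_iff_not_nodup.mpr hnd
        have hx : x ∈ d'.support := hdup.mem
        have hcount : 2 ≤ d'.support.count x := List.duplicate_iff_two_le_count.mp hdup
        set t := d'.takeUntil x hx with ht
        set r := d'.dropUntil x hx with hr
        have hspec : t.append r = d' := d'.take_spec hx
        have hct : t.support.count x = 1 := d'.count_support_takeUntil_eq_one hx
        have hsupp : d'.support = t.support ++ r.support.tail := by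
          rw [← hspec, Walk.support_append]
        have hxr : x ∈ r.support.tail := by
          by_contra hxr
          rw [hsupp, List.count_append, hct] at hcount
          have := List.count_eq_zero_of_not_mem hxr
          omega
        have hrnn : ¬ r.Nil := by
          intro hn
          have h0 : r.length = 0 := Walk.nil_iff_length_eq.mp hn
          have h1 : r.support.tail.length = 0 := by
            have := r.length_support
            simp [List.length_tail, this, h0]
          rw [List.length_eq_zero_iff] at h1
          rw [h1] at hxr
          simp at hxr
        obtain ⟨z, h2, s', hre⟩ := Walk.not_nil_iff.mp hrnn
        rw [hre] at hxr hspec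
        rw [Walk.support_cons, List.tail_cons] at hxr
        set q := s'.takeUntil x hxr with hq
        set s := s'.dropUntil x hxr with hs
        have hspec2 : q.append s = s' := s'.take_spec hxr
        -- closed walks A and B
        set A : H.Walk x x := Walk.cons h2 q with hA
        set B : H.Walk w w := Walk.cons h (t.append s) with hB
        have hsum : negCount τ (Walk.cons h d') = negCount τ A + negCount τ B := by
          rw [← hspec, ← hspec2, hA, hB]
          rw [negCount_cons, negCount_append, negCount_cons, negCount_append,
            negCount_cons, negCount_cons, negCount_append]
          ring
        have hlsum : A.length + B.length = (Walk.cons h d').length := by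
          rw [hA, hB]
          simp only [Walk.length_cons, Walk.length_append]
          have e1 : d'.length = t.length + (1 + s'.length) := by
            rw [← hspec]; simp [Walk.length_append]; omega
          have e2 : s'.length = q.length + s.length := by
            rw [← hspec2]; simp [Walk.length_append]
          omega
        have hAlen : 1 ≤ A.length := by simp [hA]
        have hBlen : 1 ≤ B.length := by simp [hB]
        rw [hsum] at hodd
        rcases Nat.even_or_odd (negCount τ A) with hA' | hA'
        · have hBodd : Odd (negCount τ B) := by
            rcases hA' with ⟨a, ha⟩; rcases hodd with ⟨m, hm⟩
            refine ⟨m - a, by omega⟩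
          obtain ⟨x', d, hcyc, hdodd, hdlen⟩ :=
            ih w B (by omega) hBodd
          exact ⟨x', d, hcyc, hdodd, by omega⟩
        · obtain ⟨x', d, hcyc, hdodd, hdlen⟩ := ih x A (by omega) hA'
          exact ⟨x', d, hcyc, hdodd, by omega⟩

theorem signPreserving_hom_proper_coloring_of_strongExactDistNeg
    {V W : Type} (G : SimpleGraph V) (σ : Sym2 V → Bool)
    (H : SimpleGraph W) (τ : Sym2 W → Bool) (k : ℕ) (φ : V → W)
    (hom : ∀ u v, G.Adj u v → H.Adj (φ u) (φ v))
    (hsign : ∀ u v, G.Adj u v → σ s(u, v) = τ s(φ u, φ v))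
    (hgirth : ∀ (w : W) (c : H.Walk w w), c.IsCycle → IsNegWalk τ c → k ≤ c.length)
    (i : ℕ) (hi1 : 1 ≤ i) (hik : i ≤ k - 1) :
    ∀ u v, (strongExactDistNeg G σ i).Adj u v → φ u ≠ φ v := by
  
  intro u v hadj hphi
  rw [strongExactDistNeg, SimpleGraph.fromRel_adj] at hadj
  obtain ⟨hne, hrel⟩ := hadj
  have key : ∀ (a b : V) (p : G.Walk a b), p.length = i → IsNegWalk σ p → φ a = φ b → False := by
    intro a b p hlen hneg hab
    let f : G →g H := ⟨φ, fun {x y} hxy => hom x y hxy⟩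
    let c : H.Walk (φ a) (φ a) := (p.map f).copy rfl hab.symm
    have hcount : negCount τ c = negCount σ p := by
      show negCount τ ((p.map f).copy rfl hab.symm) = negCount σ p
      rw [negCount_copy]
      simp only [negCount, Walk.edges_map]
      rw [List.filter_map, List.length_map]
      congr 1
      apply List.filter_congr
      intro e he
      have hE : e ∈ G.edgeSet := p.edges_subset_edgeSet he
      induction e with
      | h a b =>
        rw [SimpleGraph.mem_edgeSet] at hE
        simp only [Function.comp_apply, Sym2.map_pair_eq]
        exact (hsign a b hE).symm
    have hodd : Odd (negCount τ c) := by rw [hcount]; exact hneg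
    obtain ⟨x, d, hcyc, hdodd, hdlen⟩ := exists_neg_cycle τ c.length (φ a) c le_rfl hodd
    have hk := hgirth x d hcyc hdodd
    have hclen : c.length = i := by
      show ((p.map f).copy rfl hab.symm).length = i
      rw [Walk.length_copy, Walk.length_map, hlen]
    omega
  rcases hrel with ⟨_, p, hp, hlen, hneg⟩ | ⟨_, p, hp, hlen, hneg⟩
  · exact key u v p hlen hneg hphi
  · exact key v u p hlen hneg hphi.symm
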